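/- arXiv:1801.02278 — 2 statements merged into one kernel-verified Lean document; each statement's English description precedes it below -/
import Mathlib

section
/- Every finite approximation E ∈ AR^k (an initial segment, under ≺, of the range on ω^{[k]} of some E_k-tree) with ≺-minimum v satisfies E ⊆ X_v^max. -/
/-- Non-decreasing list of naturals. -/
abbrev NonDec (l : List ℕ) : Prop := l.Chain' (· ≤ ·)

/-- The order `≺` on nondecreasing sequences: the empty sequence is minimal;
nonempty sequences are compared by last entry, with lexicographic tie-breaking. -/
def prec (s t : List ℕ) : Prop :=
  (s = [] ∧ t ≠ []) ∨
  (s ≠ [] ∧ t ≠ [] ∧ (s.getLast! < t.getLast! ∨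
    (s.getLast! = t.getLast! ∧ List.Lex (· < ·) s t)))

/-- The map `X̂_v`: `(m_1,…,m_l) ↦ (f_1(m_1),…,f_l(m_l))` where
`f_j(0) = n_j` and `f_j(m) = n_k + m` for `m ≥ 1`, `v = (n_1,…,n_k)`. -/
def Xhat (v s : List ℕ) : List ℕ :=
  List.zipWith (fun a b => if b = 0 then a else v.getLast! + b) (v.take s.length) s

/-- The set `X_v^max`, described by its characterization:
`w ∈ X_v^max` iff `w` is nondecreasing of the same length as `v` and either
`w_1 > n_k`, or there is `1 ≤ i ≤ k` with `(w_1,…,w_i) = (n_1,…,n_i)` and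
(if `i < k`) `w_{i+1} > n_k`. -/
def XmaxSet (v : List ℕ) : Set (List ℕ) :=
  { w | w.length = v.length ∧ NonDec w ∧
    (v.getLast! < w.headI ∨
      ∃ i, 1 ≤ i ∧ i ≤ v.length ∧ w.take i = v.take i ∧
        (i < v.length → v.getLast! < w.getD i 0)) }

/-- An `E_k`-tree: a map on `ω^{≤k}` sending nondecreasing sequences of length `≤ k`
to nondecreasing sequences of the same length, preserving `≺` and initial segments. -/
def IsEkTree (k : ℕ) (X : List ℕ → List ℕ) : Prop :=
  (∀ s, NonDec s → s.length ≤ k → NonDec (X s) ∧ (X s).length = s.length) ∧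
  (∀ s t, NonDec s → NonDec t → s.length ≤ k → t.length ≤ k →
    (prec s t → prec (X s) (X t)) ∧ (s <+: t → X s <+: X t))

/-- `E ∈ AR^k`: `E` is a finite `≺`-initial segment of the restriction to `ω^{[k]}`
of some `E_k`-tree. -/
def memAR (k : ℕ) (E : Finset (List ℕ)) : Prop :=
  ∃ X : List ℕ → List ℕ, IsEkTree k X ∧
    (∀ e ∈ E, ∃ s, NonDec s ∧ s.length = k ∧ e = X s) ∧
    (∀ s, NonDec s → s.length = k → ∀ e ∈ E, prec (X s) e → X s ∈ E)

private lemma lexlt_asymm : ∀ {a b : List ℕ}, List.Lex (·<·) a b → List.Lex (·<·) b a → False := by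
  intro a b h
  induction h with
  | nil => intro h2; cases h2
  | cons h ih =>
    intro h2
    cases h2 with
    | cons h' => exact ih h'
    | rel h' => exact lt_irrefl _ h'
  | rel h =>
    intro h2
    cases h2 with
    | cons h' => exact lt_irrefl _ h
    | rel h' => exact lt_irrefl _ (h.trans h')

private lemma prec_asymm {a b : List ℕ} (h1 : prec a b) (h2 : prec b a) : False := by
  rcases h1 with ⟨ha, hb⟩ | ⟨ha, hb, h1⟩
  · rcases h2 with ⟨hb', ha'⟩ | ⟨hb', ha', _⟩
    · exact hb hb'
    · exact ha' ha
  · rcases h2 with ⟨hb', _⟩ | ⟨_, _, h2⟩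
    · exact hb hb'
    · rcases h1 with h1 | ⟨e1, l1⟩ <;> rcases h2 with h2 | ⟨e2, l2⟩
      · omega
      · omega
      · omega
      · exact lexlt_asymm l1 l2

private lemma lex_snoc {x y : ℕ} : ∀ (u : List ℕ), List.Lex (·<·) (u++[x]) (u++[y]) → x < y := by
  intro u
  induction u with
  | nil =>
    intro h
    cases h with
    | rel h => exact h
    | cons h => cases h
  | cons a u ih =>
    intro h
    cases h with
    | cons h => exact ih h
    | rel h => exact absurd h (lt_irrefl a)

private lemma lex_mid {x y : ℕ} (hxy : x < y) : ∀ (u l₁ l₂ : List ℕ),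
    List.Lex (·<·) (u ++ x :: l₁) (u ++ y :: l₂) := by
  intro u l₁ l₂
  induction u with
  | nil => exact List.Lex.rel hxy
  | cons a u ih => exact List.Lex.cons ih

private lemma prec_last_lt {u a b : List ℕ} (ha : a = u ++ [a.getLast!])
    (hb : b = u ++ [b.getLast!]) (h : prec a b) : a.getLast! < b.getLast! := by
  rcases h with ⟨h, _⟩ | ⟨_, _, h | ⟨he, hl⟩⟩
  · rw [h] at ha; exact absurd ha.symm (by simp)
  · exact h
  · rw [ha, hb] at hl
    exact lex_snoc u hl

private lemma prec_getLast!_le {a b : List ℕ} (h : prec a b) (ha : a ≠ []) :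
    a.getLast! ≤ b.getLast! := by
  rcases h with ⟨h, _⟩ | ⟨_, _, h | ⟨he, _⟩⟩
  · exact absurd h ha
  · exact le_of_lt h
  · exact le_of_eq he

private lemma prefix_snoc {p l : List ℕ} (h : p <+: l) (hl : l.length = p.length + 1) :
    l = p ++ [l.getLast!] := by
  obtain ⟨d, rfl⟩ := h
  rw [List.length_append] at hl
  obtain ⟨a, rfl⟩ := List.length_eq_one_iff.mp (by omega : d.length = 1)
  rw [List.getLast!_of_getLast? List.getLast?_concat]

private lemma getD_last {l : List ℕ} (h : l ≠ []) : l.getD (l.length - 1) 0 = l.getLast! := by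
  have h1 : 0 < l.length := List.length_pos_iff.mpr h
  have hp : l = l.take (l.length - 1) ++ [l.getLast!] :=
    prefix_snoc (List.take_prefix _ _) (by simp; omega)
  calc l.getD (l.length - 1) 0
      = (l.take (l.length - 1) ++ [l.getLast!]).getD (l.length - 1) 0 := by rw [← hp]
    _ = [l.getLast!].getD ((l.length - 1) - (l.take (l.length - 1)).length) 0 :=
        List.getD_append_right _ _ _ _ (by simp)
    _ = l.getLast! := by simp

private lemma getD_prefix {p l : List ℕ} (h : p <+: l) {j : ℕ} (hj : j < p.length) :
    l.getD j 0 = p.getD j 0 := by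
  obtain ⟨d, rfl⟩ := h
  exact List.getD_append p d 0 j hj

private lemma nonDec_getD_mono {l : List ℕ} (h : NonDec l) {a b : ℕ} (hab : a ≤ b)
    (hb : b < l.length) : l.getD a 0 ≤ l.getD b 0 := by
  rcases eq_or_lt_of_le hab with rfl | hab
  · exact le_refl _
  · rw [List.getD_eq_getElem _ _ (lt_trans hab hb), List.getD_eq_getElem _ _ hb]
    exact List.pairwise_iff_getElem.mp (List.isChain_iff_pairwise.mp h) a b _ hb hab

private lemma nonDec_rep (n : ℕ) : NonDec (List.replicate n 0) := by
  induction n with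
  | zero => exact List.isChain_nil
  | succ n ih =>
    rw [List.replicate_succ]
    exact List.isChain_cons.mpr ⟨fun b _ => Nat.zero_le b, ih⟩

private lemma nonDec_rep_snoc (n m : ℕ) : NonDec (List.replicate n 0 ++ [m]) := by
  induction n with
  | zero => exact List.isChain_singleton _
  | succ n ih =>
    rw [List.replicate_succ, List.cons_append]
    exact List.isChain_cons.mpr ⟨fun b _ => Nat.zero_le b, ih⟩

private lemma headI_eq_getD (l : List ℕ) : l.headI = l.getD 0 0 := by cases l <;> rfl

/-- every `E ∈ AR^k` with `≺`-minimum `v` satisfies `E ⊆ X_v^max`. -/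
theorem AR_subset_XmaxSet (k : ℕ) (hk : 1 ≤ k) (E : Finset (List ℕ)) (hE : memAR k E)
    (v : List ℕ) (hvE : v ∈ E) (hmin : ∀ e ∈ E, e = v ∨ prec v e) :
    ∀ e ∈ E, e ∈ XmaxSet v := by
  obtain ⟨k', rfl⟩ : ∃ k', k = k' + 1 := ⟨k - 1, (Nat.succ_pred_eq_of_pos hk).symm⟩
  obtain ⟨X, ⟨hX1, hX2⟩, hrep, hinit⟩ := hE
  set s₀ : List ℕ := List.replicate (k' + 1) 0 with hs₀
  have hs₀nd : NonDec s₀ := nonDec_rep _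
  have hs₀len : s₀.length = k' + 1 := by simp [hs₀]
  have hs₀ne : s₀ ≠ [] := by simp [hs₀]
  have hs₀eq : s₀ = List.replicate k' 0 ++ [0] := by rw [hs₀, List.replicate_succ']
  have hs₀last : s₀.getLast! = 0 := by
    rw [hs₀eq]; exact List.getLast!_of_getLast? List.getLast?_concat
  -- s₀ is ≺-minimal among nondecreasing length-(k'+1) sequences
  have hmin₀ : ∀ t, NonDec t → t.length = k' + 1 → t ≠ s₀ → prec s₀ t := by
    intro t htnd htlen htne
    have htne' : t ≠ [] := by intro h; rw [h] at htlen; simp at htlen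
    refine Or.inr ⟨hs₀ne, htne', Or.inl ?_⟩
    rw [hs₀last]
    by_contra hle
    push_neg at hle
    apply htne
    have hlast0 : t.getLast! = 0 := by omega
    apply List.ext_getElem (by rw [htlen, hs₀len])
    intro j hj hj2
    have hmono : t.getD j 0 ≤ t.getD (t.length - 1) 0 :=
      nonDec_getD_mono htnd (by omega) (by omega)
    rw [getD_last htne', hlast0] at hmono
    rw [← List.getD_eq_getElem t 0 hj]
    simp only [hs₀, List.getElem_replicate]
    omega
  -- v = X s₀
  obtain ⟨sv, hsvnd, hsvlen, hveq⟩ := hrep v hvE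
  have hXs₀v : v = X s₀ := by
    by_cases hsv : sv = s₀
    · rw [hveq, hsv]
    · have hpv : prec (X s₀) v := by
        rw [hveq]
        exact (hX2 s₀ sv hs₀nd hsvnd (le_of_eq hs₀len) (le_of_eq hsvlen)).1
          (hmin₀ sv hsvnd hsvlen hsv)
      have hmem : X s₀ ∈ E := hinit s₀ hs₀nd hs₀len v hvE hpv
      rcases hmin _ hmem with h | h
      · exact h.symm
      · exact absurd h (fun h => prec_asymm h hpv)
  have hvlen : v.length = k' + 1 := by
    rw [hXs₀v]; rw [(hX1 s₀ hs₀nd (le_of_eq hs₀len)).2, hs₀len]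
  have hvne : v ≠ [] := by intro h; rw [h] at hvlen; simp at hvlen
  -- main part
  intro e he
  obtain ⟨t, htnd, htlen, rfl⟩ := hrep e he
  have hXt := hX1 t htnd (le_of_eq htlen)
  refine ⟨by rw [hXt.2, htlen, hvlen], hXt.1, ?_⟩
  by_cases hts : t = s₀
  · refine Or.inr ⟨k' + 1, by omega, le_of_eq hvlen.symm, ?_, fun h => by omega⟩
    rw [hts, ← hXs₀v]
  -- t ≠ s₀ : find first nonzero position i
  have hex : ∃ j, t.getD j 0 ≠ 0 := by
    by_contra hexn
    push_neg at hexn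
    apply hts
    apply List.ext_getElem (by rw [htlen, hs₀len])
    intro j hj hj2
    have := hexn j
    rw [List.getD_eq_getElem t 0 hj] at this
    simp only [hs₀, List.getElem_replicate]
    exact this
  set i := Nat.find hex with hidef
  have hi : t.getD i 0 ≠ 0 := Nat.find_spec hex
  have hilt : i < k' + 1 := by
    by_contra hik
    push_neg at hik
    exact hi (List.getD_eq_default _ _ (by omega))
  have hiz : ∀ j, j < i → t.getD j 0 = 0 := by
    intro j hj
    have := Nat.find_min hex hj
    simpa using this
  set m := t.getD i 0 with hm
  have hm1 : 1 ≤ m := Nat.one_le_iff_ne_zero.mpr hi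
  -- t.take i = replicate i 0
  have htake : t.take i = List.replicate i 0 := by
    apply List.ext_getElem (by simp [htlen]; omega)
    intro j hj hj2
    have hji : j < i := by simpa using hj2
    simp only [List.getElem_replicate]
    rw [List.getElem_take]
    have := hiz j hji
    rwa [List.getD_eq_getElem t 0 (by omega)] at this
  -- t.take (i+1) = replicate i 0 ++ [m]
  have hgetI : t[i]? = some m := by
    rw [List.getElem?_eq_getElem (show i < t.length by omega)]
    rw [hm, List.getD_eq_getElem t 0 (by omega)]
  have hr : t.take (i + 1) = List.replicate i 0 ++ [m] := by
    rw [List.take_succ, htake, hgetI]; rfl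
  -- w'
  set w' : List ℕ := List.replicate k' 0 ++ [m] with hw'
  have hw'nd : NonDec w' := nonDec_rep_snoc _ _
  have hw'len : w'.length = k' + 1 := by simp [hw']
  have hw'last : w'.getLast! = m := List.getLast!_of_getLast? List.getLast?_concat
  have hw'ne : w' ≠ [] := by simp [hw']
  have hps₀w' : prec s₀ w' :=
    Or.inr ⟨hs₀ne, hw'ne, Or.inl (by rw [hs₀last, hw'last]; omega)⟩
  -- common prefix u = X (replicate k' 0)
  have hrepk'nd : NonDec (List.replicate k' 0) := nonDec_rep _
  have hrepk'len : (List.replicate k' 0).length ≤ k' + 1 := by simp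
  have hu1 : X (List.replicate k' 0) <+: X w' :=
    (hX2 _ _ hrepk'nd hw'nd hrepk'len (le_of_eq hw'len)).2 (by rw [hw']; exact List.prefix_append _ _)
  have hu2 : X (List.replicate k' 0) <+: v := by
    rw [hXs₀v]
    exact (hX2 _ _ hrepk'nd hs₀nd hrepk'len (le_of_eq hs₀len)).2
      (by rw [hs₀eq]; exact List.prefix_append _ _)
  have hulen : (X (List.replicate k' 0)).length = k' := by
    rw [(hX1 _ hrepk'nd hrepk'len).2]; simp
  have hXw'len : (X w').length = k' + 1 := by rw [(hX1 _ hw'nd (le_of_eq hw'len)).2, hw'len]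
  have hveqL : v = X (List.replicate k' 0) ++ [v.getLast!] :=
    prefix_snoc hu2 (by rw [hvlen, hulen])
  have hw'eqc : X w' = X (List.replicate k' 0) ++ [(X w').getLast!] :=
    prefix_snoc hu1 (by rw [hXw'len, hulen])
  have hpvw' : prec v (X w') := by
    rw [hXs₀v]
    exact (hX2 s₀ w' hs₀nd hw'nd (le_of_eq hs₀len) (le_of_eq hw'len)).1 hps₀w'
  have hLc : v.getLast! < (X w').getLast! := prec_last_lt hveqL hw'eqc hpvw'
  -- key : v.getLast! < (X t).getD i 0
  have hfin : v.getLast! < (X t).getD i 0 := by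
    by_cases hik : i = k'
    · -- then t = w'
      have ht_eq : t = w' := by
        have h1 : t.take (i + 1) = t := by
          rw [show i + 1 = t.length by omega]; exact List.take_length ..
        rw [← h1, hr, hw', hik]
      rw [ht_eq, show i = (X w').length - 1 by omega, getD_last (by
        intro h; rw [h] at hXw'len; simp at hXw'len)]
      exact hLc
    · -- i < k' : use r = t.take (i+1)
      have hik' : i < k' := by omega
      set r : List ℕ := t.take (i + 1) with hrdef
      have hrnd : NonDec r := htnd.take _
      have hrlen : r.length = i + 1 := by simp [hrdef, htlen]; omega
      have hrne : r ≠ [] := by intro h; rw [h] at hrlen; simp at hrlen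
      have hrlast : r.getLast! = m := by
        rw [hr]; exact List.getLast!_of_getLast? List.getLast?_concat
      -- prec w' r
      have hw'form : w' = List.replicate i 0 ++ (0 :: (List.replicate (k' - i - 1) 0 ++ [m])) := by
        rw [hw', show k' = i + (k' - i - 1 + 1) by omega, List.replicate_add,
          List.replicate_succ]
        simp [List.append_assoc]
      have hlex : List.Lex (·<·) w' r := by
        rw [hw'form, hr]
        exact lex_mid (by omega) _ _ _
      have hpw'r : prec w' r :=
        Or.inr ⟨hw'ne, hrne, Or.inr ⟨by rw [hw'last, hrlast], hlex⟩⟩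
      have hpXw'Xr : prec (X w') (X r) :=
        (hX2 w' r hw'nd hrnd (le_of_eq hw'len) (by omega)).1 hpw'r
      have hXw'ne : X w' ≠ [] := by intro h; rw [h] at hXw'len; simp at hXw'len
      have hle : (X w').getLast! ≤ (X r).getLast! := prec_getLast!_le hpXw'Xr hXw'ne
      -- X r is a prefix of X t
      have hXrXt : X r <+: X t :=
        (hX2 r t hrnd htnd (by omega) (le_of_eq htlen)).2 (List.take_prefix _ _)
      have hXrlen : (X r).length = i + 1 := by rw [(hX1 r hrnd (by omega)).2, hrlen]
      have hXrne : X r ≠ [] := by intro h; rw [h] at hXrlen; simp at hXrlen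
      rw [getD_prefix hXrXt (by omega), show i = (X r).length - 1 by omega,
        getD_last hXrne]
      omega
  -- conclude
  rcases Nat.eq_zero_or_pos i with hzero | hipos
  · left
    rw [hzero] at hfin
    rwa [headI_eq_getD]
  · right
    refine ⟨i, hipos, by omega, ?_, fun _ => hfin⟩
    -- (X t).take i = v.take i
    have h1 : List.replicate i 0 <+: t := htake ▸ List.take_prefix i t
    have h2 : List.replicate i 0 <+: s₀ := by
      rw [hs₀, show k' + 1 = i + (k' + 1 - i) by omega, List.replicate_add]
      exact List.prefix_append _ _
    have hrepind : NonDec (List.replicate i 0) := nonDec_rep _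
    have hrepilen : (List.replicate i 0).length ≤ k' + 1 := by simp; omega
    have hXi1 : X (List.replicate i 0) <+: X t :=
      (hX2 _ t hrepind htnd hrepilen (le_of_eq htlen)).2 h1
    have hXi2 : X (List.replicate i 0) <+: X s₀ :=
      (hX2 _ s₀ hrepind hs₀nd hrepilen (le_of_eq hs₀len)).2 h2
    have hXilen : (X (List.replicate i 0)).length = i := by
      rw [(hX1 _ hrepind hrepilen).2]; simp
    have e1 : (X t).take i = X (List.replicate i 0) := by
      have h := List.prefix_iff_eq_take.mp hXi1
      rw [hXilen] at h
      exact h.symm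
    have e2 : v.take i = X (List.replicate i 0) := by
      have h := List.prefix_iff_eq_take.mp hXi2
      rw [hXilen] at h
      rw [hXs₀v]
      exact h.symm
    rw [e1, e2]
end

section
/- For any x in c_00(ω^{[k]}) whose support has exactly n elements, the sequence of norms |x|_j defined recursively by |x|_0 = max |x_v| and |x|_{j+1} = max{ |x|_j, θ · max{ Σ_{i=1}^m |E_i x|_j : 1 ≤ m ≤ d, E_1 < … < E_m admissible sets in AR^k } } stabilizes at stage n: |x|_n = |x|_{n+1} = |x|_{n+2} = …. -/
/-- `ω^{[k]}`: nondecreasing sequences of naturals of length exactly `k`. -/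
abbrev Vec (k : ℕ) := {l : List ℕ // NonDec l ∧ l.length = k}

/-- Restriction `Ex` of a finitely supported vector to a set of coordinates. -/
noncomputable def restrict {k : ℕ} (E : Finset (Vec k)) (x : Vec k →₀ ℝ) : Vec k →₀ ℝ :=
  x.filter (fun v => v ∈ E)

/-- `A < B`: every element of `A` is `≺`-below every element of `B`. -/
def Successive {k : ℕ} (A B : Finset (Vec k)) : Prop :=
  ∀ a ∈ A, ∀ b ∈ B, prec a.1 b.1

/-- Membership in `AR^k` for finite sets of elements of `ω^{[k]}`. -/
def memARV (k : ℕ) (E : Finset (Vec k)) : Prop :=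
  memAR k (E.image Subtype.val)

/-- A `d`-admissible sequence: at most `d` many `≺`-successive members of `AR^k`. -/
def Admissible (k d : ℕ) {m : ℕ} (E : Fin m → Finset (Vec k)) : Prop :=
  m ≤ d ∧ (∀ i, memARV k (E i)) ∧ ∀ i j, i < j → Successive (E i) (E j)

/-- The nondecreasing sequence of norms `|x|_j` defining the Tsirelson-type norm:
`|x|_0 = max |x_v|`, and `|x|_{j+1}` is the max of `|x|_j` and
`θ ∑ |E_i x|_j` over admissible sequences `(E_i)_{i=1}^m`, `1 ≤ m ≤ d`. -/
noncomputable def normSeq (k d : ℕ) (θ : ℝ) : ℕ → (Vec k →₀ ℝ) → ℝ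
  | 0, x => ⨆ v, |x v|
  | j + 1, x => max (normSeq k d θ j x)
      (sSup { r | ∃ m : ℕ, 1 ≤ m ∧ ∃ E : Fin m → Finset (Vec k),
        Admissible k d E ∧ r = θ * ∑ i, normSeq k d θ j (restrict (E i) x) })

/-- The norm of `T_k(d,θ)` on finitely supported vectors. -/
noncomputable def tnorm (k d : ℕ) (θ : ℝ) (x : Vec k →₀ ℝ) : ℝ :=
  ⨆ j, normSeq k d θ j x


section Aux

lemma nonDec_replicate : ∀ k : ℕ, NonDec (List.replicate k 0)
  | 0 => List.isChain_nil
  | (k+1) => by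
      rw [List.replicate_succ]
      exact List.isChain_cons.mpr ⟨fun b _ => Nat.zero_le b, nonDec_replicate k⟩

instance vecNonempty {k : ℕ} : Nonempty (Vec k) :=
  ⟨⟨List.replicate k 0, nonDec_replicate k, List.length_replicate⟩⟩

lemma prec_irrefl (s : List ℕ) : ¬ prec s s := by
  rintro (⟨h1, h2⟩ | ⟨h1, h2, h3 | ⟨h3, h4⟩⟩)
  · exact h2 h1
  · exact lt_irrefl _ h3
  · exact asymm h4 h4

/-- The ℓ¹ "norm" of a finitely supported vector. -/
noncomputable def l1 {k : ℕ} (x : Vec k →₀ ℝ) : ℝ := ∑ v ∈ x.support, |x v|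

lemma l1_nonneg {k : ℕ} (x : Vec k →₀ ℝ) : 0 ≤ l1 x :=
  Finset.sum_nonneg fun _ _ => abs_nonneg _

lemma abs_le_l1 {k : ℕ} (x : Vec k →₀ ℝ) (v : Vec k) : |x v| ≤ l1 x := by
  by_cases h : v ∈ x.support
  · exact Finset.single_le_sum (fun i _ => abs_nonneg (x i)) h
  · rw [Finsupp.notMem_support_iff.mp h, abs_zero]; exact l1_nonneg x

lemma restrict_support {k : ℕ} (E : Finset (Vec k)) (x : Vec k →₀ ℝ) :
    (restrict E x).support = x.support.filter (fun v => v ∈ E) := by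
  classical
  rw [restrict, Finsupp.support_filter]

lemma restrict_apply {k : ℕ} (E : Finset (Vec k)) (x : Vec k →₀ ℝ) (v : Vec k) :
    restrict E x v = if v ∈ E then x v else 0 := by
  rw [restrict, Finsupp.filter_apply]

lemma restrict_eq_self {k : ℕ} {E : Finset (Vec k)} {x : Vec k →₀ ℝ}
    (h : x.support ⊆ E) : restrict E x = x := by
  ext v
  rw [restrict_apply]
  split_ifs with hv
  · rfl
  · exact (Finsupp.notMem_support_iff.mp (fun hs => hv (h hs))).symm

lemma restrict_eq_zero {k : ℕ} {E : Finset (Vec k)} {x : Vec k →₀ ℝ}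
    (h : ∀ v ∈ x.support, v ∉ E) : restrict E x = 0 := by
  ext v
  rw [restrict_apply]
  split_ifs with hv
  · exact Finsupp.notMem_support_iff.mp fun hs => h v hs hv
  · rfl

lemma l1_restrict {k : ℕ} (E : Finset (Vec k)) (x : Vec k →₀ ℝ) :
    l1 (restrict E x) = ∑ v ∈ x.support.filter (fun v => v ∈ E), |x v| := by
  rw [l1, restrict_support]
  refine Finset.sum_congr rfl fun v hv => ?_
  rw [restrict_apply, if_pos (Finset.mem_filter.mp hv).2]

lemma sum_l1_restrict_le {k : ℕ} {m : ℕ} (E : Fin m → Finset (Vec k))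
    (hE : ∀ i j, i < j → Successive (E i) (E j)) (x : Vec k →₀ ℝ) :
    ∑ i, l1 (restrict (E i) x) ≤ l1 x := by
  classical
  have hdisj : ∀ i ∈ (Finset.univ : Finset (Fin m)), ∀ j ∈ (Finset.univ : Finset (Fin m)),
      i ≠ j → Disjoint (x.support.filter (fun v => v ∈ E i))
        (x.support.filter (fun v => v ∈ E j)) := by
    intro i _ j _ hij
    refine Finset.disjoint_left.mpr ?_
    intro v hvi hvj
    have h1 : v ∈ E i := (Finset.mem_filter.mp hvi).2
    have h2 : v ∈ E j := (Finset.mem_filter.mp hvj).2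
    rcases lt_or_gt_of_ne hij with h | h
    · exact prec_irrefl v.1 (hE i j h v h1 v h2)
    · exact prec_irrefl v.1 (hE j i h v h2 v h1)
  calc ∑ i, l1 (restrict (E i) x)
      = ∑ i, ∑ v ∈ x.support.filter (fun v => v ∈ E i), |x v| := by
        exact Finset.sum_congr rfl fun i _ => l1_restrict _ _
    _ = ∑ v ∈ Finset.univ.biUnion (fun i => x.support.filter (fun v => v ∈ E i)), |x v| :=
        (Finset.sum_biUnion hdisj).symm
    _ ≤ ∑ v ∈ x.support, |x v| := by
        refine Finset.sum_le_sum_of_subset_of_nonneg ?_ (fun v _ _ => abs_nonneg _)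
        intro v hv
        obtain ⟨i, _, hvi⟩ := Finset.mem_biUnion.mp hv
        exact (Finset.mem_filter.mp hvi).1
    _ = l1 x := rfl

lemma normSeq_nonneg (k d : ℕ) (θ : ℝ) : ∀ j (x : Vec k →₀ ℝ), 0 ≤ normSeq k d θ j x
  | 0, x => Real.iSup_nonneg fun v => abs_nonneg _
  | (j+1), x => le_trans (normSeq_nonneg k d θ j x) (le_max_left _ _)

lemma normSeq_le_succ (k d : ℕ) (θ : ℝ) (j : ℕ) (x : Vec k →₀ ℝ) :
    normSeq k d θ j x ≤ normSeq k d θ (j+1) x := le_max_left _ _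

lemma normSeq_le_l1 (k d : ℕ) {θ : ℝ} (hθ0 : 0 < θ) (hθ1 : θ < 1) :
    ∀ j (x : Vec k →₀ ℝ), normSeq k d θ j x ≤ l1 x
  | 0, x => Real.iSup_le (fun v => abs_le_l1 x v) (l1_nonneg x)
  | (j+1), x => by
      refine max_le (normSeq_le_l1 k d hθ0 hθ1 j x) (Real.sSup_le ?_ (l1_nonneg x))
      rintro r ⟨m, hm, E, hE, rfl⟩
      calc θ * ∑ i, normSeq k d θ j (restrict (E i) x)
          ≤ θ * ∑ i, l1 (restrict (E i) x) := by
            refine mul_le_mul_of_nonneg_left ?_ hθ0.le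
            exact Finset.sum_le_sum fun i _ => normSeq_le_l1 k d hθ0 hθ1 j _
        _ ≤ θ * l1 x := mul_le_mul_of_nonneg_left (sum_l1_restrict_le E hE.2.2 x) hθ0.le
        _ ≤ 1 * l1 x := mul_le_mul_of_nonneg_right hθ1.le (l1_nonneg x)
        _ = l1 x := one_mul _

lemma normSeq_zero_fun (k d : ℕ) {θ : ℝ} (hθ0 : 0 < θ) :
    ∀ j, normSeq k d θ j (0 : Vec k →₀ ℝ) = 0
  | 0 => by
      show (⨆ v : Vec k, |(0 : Vec k →₀ ℝ) v|) = 0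
      simp
  | (j+1) => by
      show max (normSeq k d θ j 0) _ = 0
      rw [normSeq_zero_fun k d hθ0 j]
      rw [max_eq_left]
      refine Real.sSup_le ?_ le_rfl
      rintro r ⟨m, hm, E, hE, rfl⟩
      have : ∀ i : Fin m, restrict (E i) (0 : Vec k →₀ ℝ) = 0 := by
        intro i; exact restrict_eq_zero (by simp)
      simp only [this, normSeq_zero_fun k d hθ0 j, Finset.sum_const_zero, mul_zero, le_refl]

lemma normSeq_stab_aux (k d : ℕ) {θ : ℝ} (hθ0 : 0 < θ) (hθ1 : θ < 1) :
    ∀ n (x : Vec k →₀ ℝ), x.support.card ≤ n → ∀ j, n ≤ j →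
      normSeq k d θ (j+1) x ≤ normSeq k d θ j x := by
  intro n
  induction n with
  | zero =>
    intro x hx j _
    have hx0 : x = 0 := Finsupp.support_eq_empty.mp
      (Finset.card_eq_zero.mp (le_antisymm hx (Nat.zero_le _)))
    subst hx0
    rw [normSeq_zero_fun k d hθ0, normSeq_zero_fun k d hθ0]
  | succ n IH =>
    intro x hx j hj
    show max (normSeq k d θ j x) _ ≤ normSeq k d θ j x
    refine max_le le_rfl (Real.sSup_le ?_ (normSeq_nonneg k d θ j x))
    rintro r ⟨m, hm, E, hE, rfl⟩
    by_cases hcov : ∃ i, x.support ⊆ E i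
    · obtain ⟨i, hi⟩ := hcov
      have hsum : ∑ i', normSeq k d θ j (restrict (E i') x) = normSeq k d θ j x := by
        rw [Finset.sum_eq_single i]
        · rw [restrict_eq_self hi]
        · intro i' _ hne
          have h0 : restrict (E i') x = 0 := by
            refine restrict_eq_zero fun v hv hvE => ?_
            rcases lt_or_gt_of_ne hne with h | h
            · exact prec_irrefl v.1 (hE.2.2 i' i h v hvE v (hi hv))
            · exact prec_irrefl v.1 (hE.2.2 i i' h v (hi hv) v hvE)
          rw [h0, normSeq_zero_fun k d hθ0]
        · intro h; exact absurd (Finset.mem_univ i) h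
      rw [hsum]
      calc θ * normSeq k d θ j x ≤ 1 * normSeq k d θ j x :=
            mul_le_mul_of_nonneg_right hθ1.le (normSeq_nonneg k d θ j x)
        _ = normSeq k d θ j x := one_mul _
    · push_neg at hcov
      obtain ⟨j₀, rfl⟩ : ∃ j₀, j = j₀ + 1 := ⟨j - 1, by omega⟩
      have hj₀ : n ≤ j₀ := by omega
      have heach : ∀ i : Fin m, normSeq k d θ (j₀+1) (restrict (E i) x)
          = normSeq k d θ j₀ (restrict (E i) x) := by
        intro i
        have hsub : (restrict (E i) x).support ⊆ x.support := by
          rw [restrict_support]; exact Finset.filter_subset _ _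
        have hne : (restrict (E i) x).support ≠ x.support := by
          intro heq
          obtain ⟨v, hv, hvE⟩ := Finset.not_subset.mp (hcov i)
          have : v ∈ (restrict (E i) x).support → False := by
            rw [restrict_support]; intro h; exact hvE (Finset.mem_filter.mp h).2
          rw [heq] at this; exact this hv
        have hcard : (restrict (E i) x).support.card ≤ n := by
          have := Finset.card_lt_card (HasSubset.Subset.ssubset_of_ne hsub hne)
          omega
        exact le_antisymm (IH _ hcard j₀ hj₀) (normSeq_le_succ k d θ j₀ _)
      have hsum : (∑ i, normSeq k d θ (j₀+1) (restrict (E i) x))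
          = ∑ i, normSeq k d θ j₀ (restrict (E i) x) :=
        Finset.sum_congr rfl fun i _ => heach i
      rw [hsum]
      show θ * ∑ i, normSeq k d θ j₀ (restrict (E i) x) ≤
        max (normSeq k d θ j₀ x) (sSup { r | ∃ m : ℕ, 1 ≤ m ∧ ∃ E : Fin m → Finset (Vec k),
          Admissible k d E ∧ r = θ * ∑ i, normSeq k d θ j₀ (restrict (E i) x) })
      refine le_max_of_le_right (le_csSup ?_ ⟨m, hm, E, hE, rfl⟩)
      refine ⟨l1 x, ?_⟩
      rintro r ⟨m', hm', E', hE', rfl⟩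
      calc θ * ∑ i, normSeq k d θ j₀ (restrict (E' i) x)
          ≤ θ * ∑ i, l1 (restrict (E' i) x) := by
            refine mul_le_mul_of_nonneg_left ?_ hθ0.le
            exact Finset.sum_le_sum fun i _ => normSeq_le_l1 k d hθ0 hθ1 j₀ _
        _ ≤ θ * l1 x := mul_le_mul_of_nonneg_left (sum_l1_restrict_le E' hE'.2.2 x) hθ0.le
        _ ≤ 1 * l1 x := mul_le_mul_of_nonneg_right hθ1.le (l1_nonneg x)
        _ = l1 x := one_mul _

end Aux

/-- if `|supp x| = n` then the sequence of norms stabilizes at stage `n`. -/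
theorem normSeq_stabilizes (k d : ℕ) (hd : 1 ≤ d) (θ : ℝ) (hθ0 : 0 < θ) (hθ1 : θ < 1)
    (x : Vec k →₀ ℝ) (n : ℕ) (hn : x.support.card = n) :
    ∀ m, n ≤ m → normSeq k d θ m x = normSeq k d θ n x := by
  subst hn
  intro m hm
  induction m with
  | zero => rw [Nat.le_zero.mp hm]
  | succ m IHm =>
    rcases Nat.lt_or_ge x.support.card (m+1) with h | h
    · have hm' : x.support.card ≤ m := by omega
      rw [← IHm hm']
      exact le_antisymm
        (normSeq_stab_aux k d hθ0 hθ1 x.support.card x le_rfl m hm')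
        (normSeq_le_succ k d θ m x)
    · have : x.support.card = m + 1 := by omega
      rw [this]
end
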